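/- Let h : [0,T] → [0,∞) be measurable and bounded, C > 0, a ≥ 0, and suppose h(t) ≤ a + C ∫₀ᵗ h(s)² ds for all t ∈ [0,T]. If T < 1/(Ca), then h(t) ≤ 1/(1/a − Ct) = a/(1 − Cat) for all t ∈ [0,T]. -/

import Mathlib

open MeasureTheory

/-- A measurable function bounded in absolute value on `[0,T]` is interval
integrable on `[0,t]` for `t ∈ [0,T]`. -/
lemma aux_intervalIntegrable {f : ℝ → ℝ} (hf : Measurable f) {K T t : ℝ}
    (ht : t ∈ Set.Icc (0:ℝ) T)
    (hbd : ∀ s ∈ Set.Icc (0:ℝ) T, |f s| ≤ K) :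
    IntervalIntegrable f volume 0 t := by
  rw [intervalIntegrable_iff_integrableOn_Ioc_of_le ht.1]
  refine Integrable.mono' (g := fun _ => K)
    (integrableOn_const measure_Ioc_lt_top.ne (by simp))
    hf.aestronglyMeasurable.restrict ?_
  filter_upwards [ae_restrict_mem measurableSet_Ioc] with s hs
  exact hbd s ⟨hs.1.le, hs.2.trans ht.2⟩

/-- Quadratic Gronwall comparison: if `h ≤ a + C ∫₀ᵗ h²` on `[0,T]` with
`C a T < 1` (i.e. `T < 1/(Ca)`), then `h(t) ≤ a/(1 − C a t)` on `[0,T]`. -/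
theorem stmt16 (T C a : ℝ) (hT : 0 ≤ T) (hC : 0 < C) (ha : 0 ≤ a)
    (h : ℝ → ℝ) (hmeas : Measurable h)
    (hnn : ∀ t ∈ Set.Icc (0:ℝ) T, 0 ≤ h t)
    (hbdd : ∃ M, ∀ t ∈ Set.Icc (0:ℝ) T, h t ≤ M)
    (hineq : ∀ t ∈ Set.Icc (0:ℝ) T, h t ≤ a + C * ∫ s in (0:ℝ)..t, (h s)^2)
    (hsmall : C * a * T < 1) :
    ∀ t ∈ Set.Icc (0:ℝ) T, h t ≤ a / (1 - C * a * t) := by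
  obtain ⟨M, hM⟩ := hbdd
  have hM0 : 0 ≤ M := le_trans (hnn 0 ⟨le_refl _, hT⟩) (hM 0 ⟨le_refl _, hT⟩)
  set φ : ℝ → ℝ := fun s => a / (1 - C * a * s) with hφdef
  have hCa : 0 ≤ C * a := mul_nonneg hC.le ha
  have hden : ∀ s ∈ Set.Icc (0:ℝ) T, 0 < 1 - C * a * s := by
    intro s hs
    have h1 : C * a * s ≤ C * a * T := mul_le_mul_of_nonneg_left hs.2 hCa
    linarith
  have hdenT : 0 < 1 - C * a * T := hden T ⟨hT, le_refl T⟩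
  have hφnn : ∀ s ∈ Set.Icc (0:ℝ) T, 0 ≤ φ s := fun s hs => div_nonneg ha (hden s hs).le
  have hφbd : ∀ s ∈ Set.Icc (0:ℝ) T, φ s ≤ a / (1 - C * a * T) := by
    intro s hs
    have h1 : 1 - C * a * T ≤ 1 - C * a * s := by
      have := mul_le_mul_of_nonneg_left hs.2 hCa; linarith
    exact div_le_div_of_nonneg_left ha hdenT h1 |>.trans_eq rfl
  set B : ℝ := M + a / (1 - C * a * T) with hBdef
  have hB0 : 0 ≤ B := add_nonneg hM0 (div_nonneg ha hdenT.le)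
  -- Measurability of φ
  have hφmeas : Measurable φ := by
    apply Measurable.div measurable_const
    exact (measurable_const.sub (measurable_id.const_mul (C * a)))
  -- FTC identity : φ t = a + C * ∫₀ᵗ φ²
  have hφeq : ∀ t ∈ Set.Icc (0:ℝ) T, φ t = a + C * ∫ s in (0:ℝ)..t, (φ s)^2 := by
    intro t ht
    have hsub : Set.uIcc (0:ℝ) t ⊆ Set.Icc (0:ℝ) T := by
      rw [Set.uIcc_of_le ht.1]
      exact Set.Icc_subset_Icc le_rfl ht.2
    have hderiv : ∀ x ∈ Set.uIcc (0:ℝ) t, HasDerivAt φ (C * (φ x)^2) x := by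
      intro x hx
      have hdx : (0:ℝ) < 1 - C * a * x := hden x (hsub hx)
      have h1 : HasDerivAt (fun s : ℝ => 1 - C * a * s) (-(C * a)) x := by
        simpa using ((hasDerivAt_id x).const_mul (C * a)).const_sub 1
      have h2 := (h1.inv hdx.ne').const_mul a
      have hfun : φ = fun s : ℝ => a * (1 - C * a * s)⁻¹ := by
        funext s; simp [hφdef, div_eq_mul_inv]
      have hval : C * (φ x)^2 = a * (- -(C * a) / (1 - C * a * x) ^ 2) := by
        simp only [hφdef]
        field_simp
      rw [hval, hfun]
      exact h2
    have hcont : ContinuousOn (fun s => C * (φ s)^2) (Set.uIcc (0:ℝ) t) := by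
      apply ContinuousOn.mul continuousOn_const
      apply ContinuousOn.pow
      apply ContinuousOn.div continuousOn_const
      · fun_prop
      · intro s hs; exact (hden s (hsub hs)).ne'
    have := intervalIntegral.integral_eq_sub_of_hasDerivAt hderiv
      (hcont.intervalIntegrable)
    rw [intervalIntegral.integral_const_mul] at this
    have hφ0 : φ 0 = a := by simp [hφdef]
    rw [this, hφ0]; ring
  -- the defect d
  set d : ℝ → ℝ := fun s => max (h s - φ s) 0 with hddef
  have hdmeas : Measurable d := (hmeas.sub hφmeas).max measurable_const
  have hdnn : ∀ s, 0 ≤ d s := fun s => le_max_right _ _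
  have hdbd : ∀ s ∈ Set.Icc (0:ℝ) T, |d s| ≤ M := by
    intro s hs
    rw [abs_of_nonneg (hdnn s)]
    apply max_le _ hM0
    have := hφnn s hs
    have := hM s hs
    linarith
  -- integrability on subintervals
  have hint_d : ∀ t ∈ Set.Icc (0:ℝ) T, IntervalIntegrable d volume 0 t :=
    fun t ht => aux_intervalIntegrable hdmeas ht hdbd
  have hint_h2 : ∀ t ∈ Set.Icc (0:ℝ) T, IntervalIntegrable (fun s => (h s)^2) volume 0 t := by
    intro t ht
    apply aux_intervalIntegrable (hmeas.pow_const 2) ht (K := M^2)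
    intro s hs
    rw [abs_of_nonneg (sq_nonneg _)]
    exact pow_le_pow_left₀ (hnn s hs) (hM s hs) 2
  have hint_φ2 : ∀ t ∈ Set.Icc (0:ℝ) T, IntervalIntegrable (fun s => (φ s)^2) volume 0 t := by
    intro t ht
    apply aux_intervalIntegrable (hφmeas.pow_const 2) ht (K := (a / (1 - C * a * T))^2)
    intro s hs
    rw [abs_of_nonneg (sq_nonneg _)]
    exact pow_le_pow_left₀ (hφnn s hs) (hφbd s hs) 2
  -- pointwise inequality : h² − φ² ≤ B d
  have hptwise : ∀ s ∈ Set.Icc (0:ℝ) T, (h s)^2 - (φ s)^2 ≤ B * d s := by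
    intro s hs
    have e2 : (h s + φ s) * (h s - φ s) ≤ (h s + φ s) * d s :=
      mul_le_mul_of_nonneg_left (le_max_left _ _) (add_nonneg (hnn s hs) (hφnn s hs))
    have e3 : (h s + φ s) * d s ≤ B * d s := by
      apply mul_le_mul_of_nonneg_right _ (hdnn s)
      rw [hBdef]
      have := hM s hs; have := hφbd s hs; linarith
    nlinarith [e2, e3]
  -- key linear Gronwall inequality for d
  have key : ∀ t ∈ Set.Icc (0:ℝ) T, d t ≤ C * B * ∫ s in (0:ℝ)..t, d s := by
    intro t ht
    have hsubI : Set.Icc (0:ℝ) t ⊆ Set.Icc (0:ℝ) T := Set.Icc_subset_Icc le_rfl ht.2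
    have hintnn : 0 ≤ ∫ s in (0:ℝ)..t, d s :=
      intervalIntegral.integral_nonneg ht.1 (fun s _ => hdnn s)
    apply max_le _ (mul_nonneg (mul_nonneg hC.le hB0) hintnn)
    have step1 : h t - φ t ≤ C * ∫ s in (0:ℝ)..t, ((h s)^2 - (φ s)^2) := by
      have := hineq t ht
      have heq := hφeq t ht
      rw [intervalIntegral.integral_sub (hint_h2 t ht) (hint_φ2 t ht)]
      nlinarith [this, heq]
    have step2 : (∫ s in (0:ℝ)..t, ((h s)^2 - (φ s)^2)) ≤ ∫ s in (0:ℝ)..t, B * d s := by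
      apply intervalIntegral.integral_mono_on ht.1
        ((hint_h2 t ht).sub (hint_φ2 t ht))
        ((hint_d t ht).const_mul B)
      intro s hs; exact hptwise s (hsubI hs)
    have step3 : (∫ s in (0:ℝ)..t, B * d s) = B * ∫ s in (0:ℝ)..t, d s :=
      intervalIntegral.integral_const_mul _ _
    calc h t - φ t ≤ C * ∫ s in (0:ℝ)..t, ((h s)^2 - (φ s)^2) := step1
      _ ≤ C * ∫ s in (0:ℝ)..t, B * d s := by
          exact mul_le_mul_of_nonneg_left step2 hC.le
      _ = C * B * ∫ s in (0:ℝ)..t, d s := by rw [step3]; ring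
  -- Picard iteration bound
  have ind : ∀ n : ℕ, ∀ t ∈ Set.Icc (0:ℝ) T,
      d t ≤ M * (C * B * t)^n / (n.factorial : ℝ) := by
    intro n
    induction n with
    | zero =>
        intro t ht
        simp only [pow_zero, Nat.factorial_zero, Nat.cast_one, mul_one, div_one]
        have := hdbd t ht; rw [abs_of_nonneg (hdnn t)] at this; exact this
    | succ n ih =>
        intro t ht
        have hsubI : Set.Icc (0:ℝ) t ⊆ Set.Icc (0:ℝ) T := Set.Icc_subset_Icc le_rfl ht.2
        have hfac : (0:ℝ) < (n.factorial : ℝ) := by positivity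
        have step : (∫ s in (0:ℝ)..t, d s)
            ≤ ∫ s in (0:ℝ)..t, (M * (C * B)^n / (n.factorial : ℝ)) * s^n := by
          apply intervalIntegral.integral_mono_on ht.1 (hint_d t ht)
          · apply ContinuousOn.intervalIntegrable
            fun_prop
          · intro s hs
            have := ih s (hsubI hs)
            calc d s ≤ M * (C * B * s)^n / (n.factorial : ℝ) := this
              _ = (M * (C * B)^n / (n.factorial : ℝ)) * s^n := by
                  rw [mul_pow]; ring
        have hval : (∫ s in (0:ℝ)..t, (M * (C * B)^n / (n.factorial : ℝ)) * s^n)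
            = (M * (C * B)^n / (n.factorial : ℝ)) * (t^(n+1) / (n+1)) := by
          rw [intervalIntegral.integral_const_mul, integral_pow]
          norm_num
        calc d t ≤ C * B * ∫ s in (0:ℝ)..t, d s := key t ht
          _ ≤ C * B * ((M * (C * B)^n / (n.factorial : ℝ)) * (t^(n+1) / (n+1))) := by
              rw [← hval]
              exact mul_le_mul_of_nonneg_left step (mul_nonneg hC.le hB0)
          _ = M * (C * B * t)^(n+1) / ((n+1).factorial : ℝ) := by
              have alg : ∀ x : ℝ, x * ((M * x^n / (n.factorial : ℝ)) * (t^(n+1)/(n+1)))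
                  = M * (x * t)^(n+1) / ((n+1).factorial : ℝ) := by
                intro x
                rw [Nat.factorial_succ, mul_pow, pow_succ]
                push_cast
                have hne : ((n.factorial : ℝ)) ≠ 0 := by positivity
                field_simp
                ring
              exact alg (C * B)
  -- let n → ∞
  intro t ht
  have hd0 : d t ≤ 0 := by
    have hbound : ∀ n : ℕ, d t ≤ M * (C * B * T)^n / (n.factorial : ℝ) := by
      intro n
      have h1 := ind n t ht
      have h2 : (C * B * t)^n ≤ (C * B * T)^n :=
        pow_le_pow_left₀ (mul_nonneg (mul_nonneg hC.le hB0) ht.1)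
          (mul_le_mul_of_nonneg_left ht.2 (mul_nonneg hC.le hB0)) n
      have hfac : (0:ℝ) < (n.factorial : ℝ) := by positivity
      calc d t ≤ M * (C * B * t)^n / (n.factorial : ℝ) := h1
        _ ≤ M * (C * B * T)^n / (n.factorial : ℝ) := by
            apply div_le_div_of_nonneg_right (mul_le_mul_of_nonneg_left h2 hM0) hfac.le
    have htend : Filter.Tendsto (fun n : ℕ => M * (C * B * T)^n / (n.factorial : ℝ))
        Filter.atTop (nhds 0) := by
      have := (FloorSemiring.tendsto_pow_div_factorial_atTop (C * B * T)).const_mul M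
      simpa [mul_div_assoc] using this
    exact ge_of_tendsto' htend hbound
  have : h t - φ t ≤ 0 := le_trans (le_max_left _ _) hd0
  linarith [this]
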